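/- Let {X_t} be a stationary Markov chain on finite X and Y_t = m(X_t) for a partition map m. With optimal within-cluster parameters r and staying parameters s, and the relaxed per-origin cluster distributions u_j^i = p_{i→j}/p_{i↛i} for j≠i (and u_i^i = 0), the minimum of the relaxed relative entropy rate equals I(X_t;X_{t-1}) − I(Y_t;Y_{t-1}). Consequently, since the non-relaxed minimum (with a single distribution u) is at least the relaxed minimum, I(X_t;X_{t-1}) − I(Y_t;Y_{t-1}) ≤ min over the original parameter set of D(P||Q^Y). -/

import Mathlib

open Finset

lemma gibbs_aux {ι : Type*} (s : Finset ι) (p q : ι → ℝ)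
    (hp : ∀ i ∈ s, 0 < p i) (hq : ∀ i ∈ s, 0 < q i)
    (hs : ∑ i ∈ s, q i ≤ ∑ i ∈ s, p i) :
    0 ≤ ∑ i ∈ s, p i * Real.log (p i / q i) := by
  have h : ∑ i ∈ s, p i * Real.log (q i / p i) ≤ ∑ i ∈ s, (q i - p i) := by
    apply Finset.sum_le_sum
    intro i hi
    have h1 : Real.log (q i / p i) ≤ q i / p i - 1 :=
      Real.log_le_sub_one_of_pos (div_pos (hq i hi) (hp i hi))
    calc p i * Real.log (q i / p i) ≤ p i * (q i / p i - 1) :=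
          mul_le_mul_of_nonneg_left h1 (hp i hi).le
      _ = q i - p i := by
          field_simp [(hp i hi).ne']
  have h2 : ∑ i ∈ s, p i * Real.log (p i / q i)
      = -∑ i ∈ s, p i * Real.log (q i / p i) := by
    rw [← Finset.sum_neg_distrib]
    apply Finset.sum_congr rfl
    intro i hi
    rw [Real.log_div (hp i hi).ne' (hq i hi).ne', Real.log_div (hq i hi).ne' (hp i hi).ne']
    ring
  rw [h2]
  have : ∑ i ∈ s, (q i - p i) ≤ 0 := by
    rw [Finset.sum_sub_distrib]; linarith
  linarith


lemma div_mul_div_cancel_aux' (a b c d t : ℝ) (ht : t ≠ 0) (hb : b ≠ 0) (hc : c ≠ 0) :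
    a / b * t * (d / c / t) = a * d / (c * b) := by
  field_simp

/-- Let `{X_t}` be a stationary Markov chain on finite `X` (stationary
distribution `pX`, positive transition kernel `P`) and `Y_t = m (X_t)` for a partition
map `m`. With the optimal within-cluster parameters `r* β = pX β / p_{m β}`, staying
parameters `s* i = 1 - p_{i→i}`, and the relaxed per-origin cluster distributions
`u*ⁱ j = p_{i→j} / p_{i↛i}` for `j ≠ i` (and `u*ⁱ i = 0`), the relaxed relative entropy
rate equals `I(X_t;X_{t-1}) - I(Y_t;Y_{t-1})`. Consequently, since the non-relaxed
minimum (a single cross-cluster distribution `u`) is at least the relaxed minimum,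
`I(X_t;X_{t-1}) - I(Y_t;Y_{t-1}) ≤ D(P‖Q^Y)` for every admissible `(r, s, u)`. -/
theorem relaxed_minimum_and_lower_bound {X : Type*} [Fintype X] {K : ℕ}
    (m : X → Fin K) (hm : Function.Surjective m)
    (pX : X → ℝ) (hpX0 : ∀ α, 0 < pX α) (hpX1 : ∑ α, pX α = 1)
    (P : X → X → ℝ) (hPpos : ∀ α β, 0 < P α β) (hProw : ∀ α, ∑ β, P α β = 1)
    (hstat : ∀ β, ∑ α, pX α * P α β = pX β)
    (pclust : Fin K → ℝ)
    (hpclust : ∀ i, pclust i = ∑ α ∈ Finset.univ.filter (fun α => m α = i), pX α)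
    (Jy : Fin K → Fin K → ℝ)
    (hJy : ∀ i j, Jy i j = ∑ α ∈ Finset.univ.filter (fun α => m α = i),
      ∑ β ∈ Finset.univ.filter (fun β => m β = j), pX α * P α β)
    (pii : Fin K → ℝ) (hpii : ∀ i, pii i = Jy i i / pclust i)
    (rstar : X → ℝ) (hrstar : ∀ β, rstar β = pX β / pclust (m β))
    (sstar : Fin K → ℝ) (hsstar : ∀ i, sstar i = 1 - pii i)
    (ustar : Fin K → Fin K → ℝ)
    (hustar : ∀ i j, ustar i j =
      if j = i then 0 else (Jy i j / pclust i) / (1 - pii i))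
    (qrel : X → X → ℝ)
    (hqrel : ∀ α β, qrel α β = if m β = m α then rstar β * (1 - sstar (m α))
      else rstar β * sstar (m α) * ustar (m α) (m β) / (1 - ustar (m α) (m α)))
    (IX IY : ℝ)
    (hIX : IX = ∑ α, ∑ β,
      pX α * P α β * Real.log ((pX α * P α β) / (pX α * pX β)))
    (hIY : IY = ∑ i, ∑ j, Jy i j * Real.log (Jy i j / (pclust i * pclust j))) :
    (∑ α, ∑ β, pX α * P α β * Real.log (P α β / qrel α β) = IX - IY) ∧
    (∀ (r : X → ℝ) (s u : Fin K → ℝ),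
      (∀ β, 0 < r β) →
      (∀ i, ∑ β ∈ Finset.univ.filter (fun β => m β = i), r β = 1) →
      (∀ i, 0 < s i ∧ s i < 1) →
      (∀ i, 0 < u i ∧ u i < 1) → (∑ i, u i = 1) →
      IX - IY ≤ ∑ α, ∑ β, pX α * P α β *
        Real.log (P α β / (if m β = m α then r β * (1 - s (m α))
          else r β * s (m α) * u (m β) / (1 - u (m α))))) := by

  classical
  -- basic positivity facts
  have hfibne : ∀ i : Fin K, (Finset.univ.filter (fun α => m α = i)).Nonempty := by
    intro i
    obtain ⟨α, hα⟩ := hm i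
    exact ⟨α, by simp [hα]⟩
  have hpc : ∀ i, 0 < pclust i := by
    intro i
    rw [hpclust]
    exact Finset.sum_pos (fun α _ => hpX0 α) (hfibne i)
  have hJpos : ∀ i j, 0 < Jy i j := by
    intro i j
    rw [hJy]
    exact Finset.sum_pos (fun α _ => Finset.sum_pos
      (fun β _ => mul_pos (hpX0 α) (hPpos α β)) (hfibne j)) (hfibne i)
  -- grouping lemma
  have hgroup : ∀ (g : Fin K → Fin K → ℝ),
      ∑ i, ∑ j, Jy i j * g i j
        = ∑ α, ∑ β, pX α * P α β * g (m α) (m β) := by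
    intro g
    have step1 : ∀ i j, Jy i j * g i j
        = ∑ α ∈ Finset.univ.filter (fun α => m α = i),
          ∑ β ∈ Finset.univ.filter (fun β => m β = j),
            pX α * P α β * g (m α) (m β) := by
      intro i j
      rw [hJy, Finset.sum_mul]
      apply Finset.sum_congr rfl
      intro α hα
      rw [Finset.sum_mul]
      apply Finset.sum_congr rfl
      intro β hβ
      have hα' : m α = i := (Finset.mem_filter.mp hα).2
      have hβ' : m β = j := (Finset.mem_filter.mp hβ).2
      rw [hα', hβ']
    calc ∑ i, ∑ j, Jy i j * g i j
        = ∑ i, ∑ α ∈ Finset.univ.filter (fun α => m α = i),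
            ∑ j, ∑ β ∈ Finset.univ.filter (fun β => m β = j),
              pX α * P α β * g (m α) (m β) := by
          apply Finset.sum_congr rfl; intro i _
          rw [Finset.sum_comm]
          apply Finset.sum_congr rfl; intro j _
          exact step1 i j
      _ = ∑ i, ∑ α ∈ Finset.univ.filter (fun α => m α = i),
            ∑ β, pX α * P α β * g (m α) (m β) := by
          apply Finset.sum_congr rfl; intro i _
          apply Finset.sum_congr rfl; intro α _
          exact Finset.sum_fiberwise _ m _
      _ = ∑ α, ∑ β, pX α * P α β * g (m α) (m β) :=
          Finset.sum_fiberwise _ m _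
  have hJrow : ∀ i, ∑ j, Jy i j = pclust i := by
    intro i
    rw [hpclust]
    calc ∑ j, Jy i j
        = ∑ α ∈ Finset.univ.filter (fun α => m α = i),
            ∑ j, ∑ β ∈ Finset.univ.filter (fun β => m β = j), pX α * P α β := by
          rw [Finset.sum_comm]
          exact Finset.sum_congr rfl (fun j _ => hJy i j)
      _ = ∑ α ∈ Finset.univ.filter (fun α => m α = i), ∑ β, pX α * P α β := by
          apply Finset.sum_congr rfl; intro α _
          exact Finset.sum_fiberwise _ m _
      _ = ∑ α ∈ Finset.univ.filter (fun α => m α = i), pX α := by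
          apply Finset.sum_congr rfl; intro α _
          rw [← Finset.mul_sum, hProw α, mul_one]
  -- rows of Jy
  have hpcsum : ∑ i, pclust i = 1 := by
    have : ∑ i, pclust i = ∑ α, pX α := by
      rw [← Finset.sum_fiberwise Finset.univ m pX]
      exact Finset.sum_congr rfl (fun i _ => hpclust i)
    rw [this, hpX1]
  -- closed form of qrel
  have hpii_pos : ∀ i, 0 < pii i := by
    intro i; rw [hpii]; exact div_pos (hJpos i i) (hpc i)
  have hpii_lt : ∀ i j : Fin K, j ≠ i → pii i < 1 := by
    intro i j hij
    rw [hpii, div_lt_one (hpc i), ← hJrow i,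
      ← Finset.add_sum_erase _ _ (Finset.mem_univ i)]
    have : 0 < ∑ k ∈ Finset.univ.erase i, Jy i k :=
      Finset.sum_pos (fun k _ => hJpos i k) ⟨j, Finset.mem_erase.mpr ⟨hij, Finset.mem_univ j⟩⟩
    linarith
  have hq' : ∀ α β, qrel α β
      = pX β * Jy (m α) (m β) / (pclust (m α) * pclust (m β)) := by
    intro α β
    rw [hqrel]
    by_cases h : m β = m α
    · rw [if_pos h, hrstar, hsstar, hpii, h]
      rw [sub_sub_cancel, div_mul_div_comm]
    · rw [if_neg h, hrstar, hsstar, hustar, hustar, if_pos rfl, if_neg h]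
      have h1 : pii (m α) < 1 := hpii_lt (m α) (m β) h
      have h2 : (1 : ℝ) - pii (m α) ≠ 0 := ne_of_gt (by linarith)
      rw [sub_zero, div_one]
      exact div_mul_div_cancel_aux' (pX β) (pclust (m β)) (pclust (m α))
        (Jy (m α) (m β)) (1 - pii (m α)) h2 (hpc (m β)).ne' (hpc (m α)).ne'
  have hqrel_pos : ∀ α β, 0 < qrel α β := by
    intro α β
    rw [hq']
    exact div_pos (mul_pos (hpX0 β) (hJpos _ _)) (mul_pos (hpc _) (hpc _))
  -- Part 1
  have part1 : ∑ α, ∑ β, pX α * P α β * Real.log (P α β / qrel α β) = IX - IY := by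
    have hterm : ∀ α β, Real.log (P α β / qrel α β)
        = Real.log ((pX α * P α β) / (pX α * pX β))
          - Real.log (Jy (m α) (m β) / (pclust (m α) * pclust (m β))) := by
      intro α β
      rw [hq']
      rw [mul_div_mul_left _ _ (hpX0 α).ne']
      rw [Real.log_div (hPpos α β).ne'
        (div_pos (mul_pos (hpX0 β) (hJpos _ _)) (mul_pos (hpc _) (hpc _))).ne',
        Real.log_div (mul_pos (hpX0 β) (hJpos _ _)).ne' (mul_pos (hpc _) (hpc _)).ne',
        Real.log_mul (hpX0 β).ne' (hJpos _ _).ne',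
        Real.log_mul (hpc (m α)).ne' (hpc (m β)).ne',
        Real.log_div (hPpos α β).ne' (hpX0 β).ne',
        Real.log_div (hJpos _ _).ne' (mul_pos (hpc _) (hpc _)).ne',
        Real.log_mul (hpc (m α)).ne' (hpc (m β)).ne']
      ring
    calc ∑ α, ∑ β, pX α * P α β * Real.log (P α β / qrel α β)
        = ∑ α, ∑ β, (pX α * P α β * Real.log ((pX α * P α β) / (pX α * pX β))
            - pX α * P α β * Real.log (Jy (m α) (m β) / (pclust (m α) * pclust (m β)))) := by
          apply Finset.sum_congr rfl; intro α _
          apply Finset.sum_congr rfl; intro β _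
          rw [hterm]; ring
      _ = IX - IY := by
          rw [Finset.sum_congr rfl (fun α _ => Finset.sum_sub_distrib _ _),
            Finset.sum_sub_distrib, hIX, hIY,
            hgroup (fun i j => Real.log (Jy i j / (pclust i * pclust j)))]
  refine ⟨part1, ?_⟩
  -- Part 2
  intro r s u hr hrsum hs hu husum
  set q : X → X → ℝ := fun α β => if m β = m α then r β * (1 - s (m α))
    else r β * s (m α) * u (m β) / (1 - u (m α)) with hqdef
  set w : Fin K → Fin K → ℝ := fun i j => if j = i then 1 - s i
    else s i * u j / (1 - u i) with hwdef
  have hw_pos : ∀ i j, 0 < w i j := by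
    intro i j
    by_cases h : j = i
    · simp only [hwdef, if_pos h]; linarith [(hs i).2]
    · simp only [hwdef, if_neg h]
      exact div_pos (mul_pos (hs i).1 (hu j).1) (by linarith [(hu i).2])
  have hqw : ∀ α β, q α β = r β * w (m α) (m β) := by
    intro α β
    rw [hqdef, hwdef]
    by_cases h : m β = m α
    · simp only [if_pos h]
    · simp only [if_neg h]; ring
  have hq_pos : ∀ α β, 0 < q α β := by
    intro α β
    rw [hqw]
    exact mul_pos (hr β) (hw_pos _ _)
  -- row sums of w
  have hwrow : ∀ i, ∑ j, w i j = 1 := by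
    intro i
    rw [← Finset.add_sum_erase _ _ (Finset.mem_univ i)]
    have h1 : w i i = 1 - s i := by rw [hwdef]; simp
    have h2 : ∑ j ∈ Finset.univ.erase i, w i j = s i := by
      have e1 : ∀ j ∈ Finset.univ.erase i, w i j = u j * (s i / (1 - u i)) := by
        intro j hj
        simp only [hwdef, if_neg (Finset.mem_erase.mp hj).1]
        ring
      rw [Finset.sum_congr rfl e1, ← Finset.sum_mul]
      have e2 : ∑ j ∈ Finset.univ.erase i, u j = 1 - u i := by
        rw [Finset.sum_erase_eq_sub (Finset.mem_univ i), husum]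
      rw [e2]
      have : (1 : ℝ) - u i ≠ 0 := by linarith [(hu i).2]
      field_simp
    rw [h1, h2]; ring
  -- termwise decomposition
  have hterm2 : ∀ α β, Real.log (P α β / q α β)
      = Real.log (P α β / qrel α β)
        + Real.log (pX β / (pclust (m β) * r β))
        + Real.log (Jy (m α) (m β) / (pclust (m α) * w (m α) (m β))) := by
    intro α β
    rw [hq', hqw]
    rw [Real.log_div (hPpos α β).ne' (mul_pos (hr β) (hw_pos _ _)).ne',
      Real.log_div (hPpos α β).ne'
        (div_pos (mul_pos (hpX0 β) (hJpos _ _)) (mul_pos (hpc _) (hpc _))).ne',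
      Real.log_div (mul_pos (hpX0 β) (hJpos _ _)).ne' (mul_pos (hpc _) (hpc _)).ne',
      Real.log_div (hpX0 β).ne' (mul_pos (hpc (m β)) (hr β)).ne',
      Real.log_div (hJpos _ _).ne' (mul_pos (hpc (m α)) (hw_pos _ _)).ne',
      Real.log_mul (hpX0 β).ne' (hJpos _ _).ne',
      Real.log_mul (hpc (m α)).ne' (hpc (m β)).ne',
      Real.log_mul (hr β).ne' (hw_pos _ _).ne',
      Real.log_mul (hpc (m β)).ne' (hr β).ne',
      Real.log_mul (hpc (m α)).ne' (hw_pos _ _).ne']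
    ring
  have TA : 0 ≤ ∑ β, pX β * Real.log (pX β / (pclust (m β) * r β)) := by
    apply gibbs_aux _ _ _ (fun β _ => hpX0 β)
      (fun β _ => mul_pos (hpc (m β)) (hr β))
    rw [hpX1]
    have : ∑ β, pclust (m β) * r β = ∑ j, pclust j := by
      rw [← Finset.sum_fiberwise Finset.univ m (fun β => pclust (m β) * r β)]
      apply Finset.sum_congr rfl
      intro j _
      have : ∀ β ∈ Finset.univ.filter (fun β => m β = j),
          pclust (m β) * r β = pclust j * r β := by
        intro β hβ
        rw [(Finset.mem_filter.mp hβ).2]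
      rw [Finset.sum_congr rfl this, ← Finset.mul_sum, hrsum j, mul_one]
    rw [this, hpcsum]
  have TB : 0 ≤ ∑ i, ∑ j, Jy i j * Real.log (Jy i j / (pclust i * w i j)) := by
    have hle : ∑ p : Fin K × Fin K, pclust p.1 * w p.1 p.2
        ≤ ∑ p : Fin K × Fin K, Jy p.1 p.2 := by
      rw [Fintype.sum_prod_type, Fintype.sum_prod_type]
      have e1 : ∑ i : Fin K, ∑ j, pclust i * w i j = 1 := by
        have h3 : ∀ i : Fin K, ∑ j, pclust i * w i j = pclust i := by
          intro i; rw [← Finset.mul_sum, hwrow i, mul_one]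
        rw [Finset.sum_congr rfl (fun i _ => h3 i), hpcsum]
      have e2 : ∑ i : Fin K, ∑ j, Jy i j = 1 := by
        rw [Finset.sum_congr rfl (fun i _ => hJrow i), hpcsum]
      rw [e1, e2]
    have h := gibbs_aux (Finset.univ : Finset (Fin K × Fin K))
      (fun p => Jy p.1 p.2) (fun p => pclust p.1 * w p.1 p.2)
      (fun p _ => hJpos p.1 p.2)
      (fun p _ => mul_pos (hpc p.1) (hw_pos p.1 p.2)) hle
    calc (0:ℝ) ≤ ∑ p : Fin K × Fin K,
          Jy p.1 p.2 * Real.log (Jy p.1 p.2 / (pclust p.1 * w p.1 p.2)) := h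
      _ = ∑ i, ∑ j, Jy i j * Real.log (Jy i j / (pclust i * w i j)) :=
          Fintype.sum_prod_type _
  -- put it all together
  have main : ∑ α, ∑ β, pX α * P α β * Real.log (P α β / q α β)
      = (IX - IY)
        + ∑ β, pX β * Real.log (pX β / (pclust (m β) * r β))
        + ∑ i, ∑ j, Jy i j * Real.log (Jy i j / (pclust i * w i j)) := by
    have e0 : ∑ α, ∑ β, pX α * P α β * Real.log (P α β / q α β)
        = ∑ α, ∑ β, (pX α * P α β * Real.log (P α β / qrel α β)
            + pX α * P α β * Real.log (pX β / (pclust (m β) * r β))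
            + pX α * P α β * Real.log (Jy (m α) (m β) / (pclust (m α) * w (m α) (m β)))) := by
      apply Finset.sum_congr rfl; intro α _
      apply Finset.sum_congr rfl; intro β _
      rw [hterm2]; ring
    have e1 : ∑ α, ∑ β, pX α * P α β * Real.log (pX β / (pclust (m β) * r β))
        = ∑ β, pX β * Real.log (pX β / (pclust (m β) * r β)) := by
      rw [Finset.sum_comm]
      apply Finset.sum_congr rfl; intro β _
      rw [← Finset.sum_mul, hstat β]
    have e2 : ∑ α, ∑ β, pX α * P α β
          * Real.log (Jy (m α) (m β) / (pclust (m α) * w (m α) (m β)))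
        = ∑ i, ∑ j, Jy i j * Real.log (Jy i j / (pclust i * w i j)) :=
      (hgroup (fun i j => Real.log (Jy i j / (pclust i * w i j)))).symm
    rw [e0]
    rw [Finset.sum_congr rfl (fun α (_ : α ∈ Finset.univ) => Finset.sum_add_distrib),
      Finset.sum_add_distrib]
    rw [Finset.sum_congr rfl (fun α (_ : α ∈ Finset.univ) => Finset.sum_add_distrib),
      Finset.sum_add_distrib]
    rw [part1, e1, e2]
  have : IX - IY ≤ ∑ α, ∑ β, pX α * P α β * Real.log (P α β / q α β) := by
    rw [main]; linarith
  simpa [hqdef] using this
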